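/- arXiv:2009.00349 — 5 statements merged into one kernel-verified Lean document; each statement's English description precedes it below -/
import Mathlib

section
/- Let K and a be natural numbers with 0 < K and a ≤ K. The total variation (statistical) distance between the uniform distribution on {0, ..., K−1} and the distribution of (a + U) where U is uniform on {0, ..., K−1} (without modular reduction, i.e., supported on {a, ..., a+K−1}) equals a/K. In particular, if a < 2^δ and K = 2^(λ+δ), this distance is less than 2^(−λ). -/
/-- Total variation distance between uniform on `{0,...,K-1}` and the shift-by-`a`
of that uniform distribution equals `a/K`; in particular it is `< 2^(-λ)` when
`a < 2^δ` and `K = 2^(λ+δ)`. -/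
theorem stmt_1 (K a lam δ : ℕ) (hK : 0 < K) (haK : a ≤ K) :
    (∑ x ∈ Finset.range (a + K),
        |(if x < K then (1 : ℝ) / K else 0) -
          (if a ≤ x ∧ x < a + K then (1 : ℝ) / K else 0)|) / 2 = (a : ℝ) / K
    ∧ (a < 2 ^ δ → K = 2 ^ (lam + δ) → (a : ℝ) / K < (2 : ℝ) ^ (-(lam : ℤ))) := by
  have hKpos : (0:ℝ) < K := by exact_mod_cast hK
  constructor
  · have key : ∀ x ∈ Finset.range (a + K),
        |(if x < K then (1 : ℝ) / K else 0) -
          (if a ≤ x ∧ x < a + K then (1 : ℝ) / K else 0)|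
        = if x < a ∨ K ≤ x then (1:ℝ)/K else 0 := by
      intro x hx
      simp only [Finset.mem_range] at hx
      by_cases h1 : x < K <;> by_cases h2 : a ≤ x
      · have : ¬ (x < a ∨ K ≤ x) := by omega
        simp [h1, h2, hx, this]
      · have : x < a ∨ K ≤ x := by omega
        simp [h1, h2, this, abs_of_nonneg, le_of_lt (one_div_pos.mpr hKpos)]
      · have : x < a ∨ K ≤ x := by omega
        simp [h1, h2, hx, this, abs_of_nonpos, le_of_lt (one_div_pos.mpr hKpos)]
      · omega
    rw [Finset.sum_congr rfl key]
    rw [Finset.sum_ite, Finset.sum_const_zero, add_zero, Finset.sum_const]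
    have hcard : (Finset.range (a + K)).filter (fun x => x < a ∨ K ≤ x)
        = Finset.range a ∪ Finset.Ico K (a + K) := by
      ext x
      simp only [Finset.mem_filter, Finset.mem_range, Finset.mem_union, Finset.mem_Ico]
      omega
    rw [hcard, Finset.card_union_of_disjoint, Finset.card_range, Nat.card_Ico]
    · have : a + K - K = a := by omega
      rw [this]
      field_simp
      rw [nsmul_eq_mul, ← mul_assoc, mul_comm (K:ℝ), mul_assoc, mul_one_div_cancel hKpos.ne', mul_one]
      push_cast
      ring
    · rw [Finset.disjoint_left]
      intro x hx hx'
      simp only [Finset.mem_range] at hx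
      simp only [Finset.mem_Ico] at hx'
      omega
  · intro h1 h2
    subst h2
    have h2pos : (0:ℝ) < 2 ^ lam := by positivity
    rw [show ((2:ℝ)) ^ (-(lam:ℤ)) = 1 / 2 ^ lam by
      rw [zpow_neg, zpow_natCast, one_div]]
    rw [div_lt_div_iff₀ hKpos h2pos, one_mul]
    have ha : (a:ℝ) < 2 ^ δ := by exact_mod_cast h1
    calc (a:ℝ) * 2 ^ lam < 2 ^ δ * 2 ^ lam := by
          exact mul_lt_mul_of_pos_right ha (by positivity)
      _ = ((2 ^ (lam + δ) : ℕ) : ℝ) := by push_cast [pow_add]; ring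
end

section
/- Let R be a commutative ring, let N ≥ 1, and let s_1, ..., s_N, c_0, c_1, a ∈ R, and M_1, ..., M_N, e_{0,1}, ..., e_{0,N}, e_{1,1}, ..., e_{1,N} ∈ R. Define h_0 = Σ_i (s_i · c_1 + M_i + e_{0,i}) and h_1 = Σ_i (−s_i · a − M_i + e_{1,i}), and let s = Σ_i s_i. Then (c_0 + h_0 + h_1) + s · a = (c_0 + s · c_1) + Σ_i (e_{0,i} + e_{1,i}). In particular, ignoring error terms (e_{0,i} = e_{1,i} = 0 for all i), the decryption of the refreshed ciphertext (c_0 + h_0 + h_1, a) under the collective secret key s equals the decryption of the original ciphertext (c_0, c_1) under s. -/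
/-- Algebraic correctness of DBootstrapALT (φ = identity): the masks cancel and
the refreshed ciphertext decrypts, up to accumulated noise, to the same plaintext. -/
theorem stmt_2 {R : Type*} [CommRing R] (N : ℕ) (hN : 1 ≤ N)
    (s M e0 e1 : Fin N → R) (c0 c1 a : R) :
    (c0 + (∑ i, (s i * c1 + M i + e0 i)) + (∑ i, (-(s i) * a - M i + e1 i)))
        + (∑ i, s i) * a
      = (c0 + (∑ i, s i) * c1) + ∑ i, (e0 i + e1 i)
    ∧ ((∀ i, e0 i = 0) → (∀ i, e1 i = 0) →
        (c0 + (∑ i, (s i * c1 + M i + e0 i)) + (∑ i, (-(s i) * a - M i + e1 i)))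
            + (∑ i, s i) * a
          = c0 + (∑ i, s i) * c1) := by
  have key : ∀ f g : Fin N → R,
      (c0 + (∑ i, (s i * c1 + M i + f i)) + (∑ i, (-(s i) * a - M i + g i)))
          + (∑ i, s i) * a
        = (c0 + (∑ i, s i) * c1) + ∑ i, (f i + g i) := by
    intro f g
    simp only [Finset.sum_add_distrib, Finset.sum_sub_distrib, Finset.mul_sum,
      Finset.sum_mul, neg_mul, Finset.sum_neg_distrib]
    ring
  refine ⟨key e0 e1, fun h0 h1 => ?_⟩
  have := key e0 e1
  simp [h0, h1] at this ⊢
  simpa [h0, h1] using this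
end

section
/- Let d ≥ 2 be a natural number and let x be a real number with 1/2 < x < 1. Then x^d / (x^d + (1 − x)^d) > x. -/
/-- Monotone progress step of the renormalized power iteration for encrypted max:
for `d ≥ 2` and `1/2 < x < 1`, one iteration strictly increases `x`. -/
theorem stmt_7 (d : ℕ) (hd : 2 ≤ d) (x : ℝ) (hx1 : 1 / 2 < x) (hx2 : x < 1) :
    x ^ d / (x ^ d + (1 - x) ^ d) > x := by
  have hx0 : 0 < x := by linarith
  have h1x : 0 < 1 - x := by linarith
  have hlt : 1 - x < x := by linarith
  have hden : 0 < x ^ d + (1 - x) ^ d := by positivity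
  rw [gt_iff_lt, lt_div_iff₀ hden]
  have hpow : (1 - x) ^ (d - 1) < x ^ (d - 1) := by
    apply pow_lt_pow_left₀ hlt (le_of_lt h1x)
    omega
  have key : x * (1 - x) ^ d < x ^ d * (1 - x) := by
    have hd1 : d = (d - 1) + 1 := by omega
    rw [hd1, pow_succ, pow_succ]
    calc x * ((1 - x) ^ (d-1) * (1 - x)) = (x * (1 - x)) * (1 - x) ^ (d-1) := by ring
      _ < (x * (1 - x)) * x ^ (d-1) := by
          exact mul_lt_mul_of_pos_left hpow (by positivity)
      _ = x ^ (d-1) * x * (1 - x) := by ring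
  nlinarith [pow_pos hx0 d]
end

section
/- Let d ≥ 2 be a natural number, 1/2 < x_0 < 1, and define the sequence x_{n+1} = x_n^d / (x_n^d + (1 − x_n)^d). Then (x_n) is strictly increasing and converges to 1. -/
open Filter

private lemma aux_key (d : ℕ) (hd : 2 ≤ d) (a : ℝ) (ha : 1/2 < a) (ha' : a < 1) :
    a * (1-a)^d < a^d * (1-a) := by
  obtain ⟨e, rfl⟩ : ∃ e, d = e + 1 := ⟨d - 1, by omega⟩
  have he : e ≠ 0 := by omega
  have h1 : (1-a)^e < a^e := pow_lt_pow_left₀ (by linarith) (by linarith) he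
  have h2 : 0 < a * (1-a) := mul_pos (by linarith) (by linarith)
  have := mul_lt_mul_of_pos_left h1 h2
  nlinarith [this, pow_succ a e, pow_succ (1-a) e]

private lemma aux_inv (d : ℕ) (hd : 2 ≤ d) (a : ℝ) (ha : 1/2 < a) (ha' : a < 1) :
    1/2 < a^d/(a^d+(1-a)^d) ∧ a^d/(a^d+(1-a)^d) < 1 := by
  have hap : (0:ℝ) < a := by linarith
  have hbp : (0:ℝ) < 1 - a := by linarith
  have h1 : (0:ℝ) < a^d := pow_pos hap d
  have h2 : (0:ℝ) < (1-a)^d := pow_pos hbp d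
  have hden : (0:ℝ) < a^d + (1-a)^d := by linarith
  have hlt : (1-a)^d < a^d := pow_lt_pow_left₀ (by linarith) (by linarith) (by omega)
  constructor
  · rw [lt_div_iff₀ hden]; linarith
  · rw [div_lt_one hden]; linarith

/-- The renormalized power iteration `xₙ₊₁ = xₙᵈ/(xₙᵈ+(1−xₙ)ᵈ)` started in `(1/2,1)`
is strictly increasing and converges to `1`. -/
theorem stmt_8 (d : ℕ) (hd : 2 ≤ d) (x : ℕ → ℝ)
    (h0 : 1 / 2 < x 0) (h0' : x 0 < 1)
    (hrec : ∀ n, x (n + 1) = (x n) ^ d / ((x n) ^ d + (1 - x n) ^ d)) :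
    StrictMono x ∧ Filter.Tendsto x Filter.atTop (nhds 1) := by
  have hinv : ∀ n, 1/2 < x n ∧ x n < 1 := by
    intro n
    induction n with
    | zero => exact ⟨h0, h0'⟩
    | succ k ih =>
      rw [hrec]
      exact aux_inv d hd (x k) ih.1 ih.2
  have hmono : StrictMono x := by
    apply strictMono_nat_of_lt_succ
    intro n
    obtain ⟨ha, ha'⟩ := hinv n
    set a := x n
    have hden : (0:ℝ) < a^d + (1-a)^d :=
      add_pos (pow_pos (by linarith) d) (pow_pos (by linarith) d)
    rw [hrec, lt_div_iff₀ hden]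
    have := aux_key d hd a ha ha'
    nlinarith
  have hb : BddAbove (Set.range x) := by
    refine ⟨1, ?_⟩
    rintro _ ⟨n, rfl⟩
    exact (hinv n).2.le
  set L := ⨆ n, x n with hLdef
  have hL : Tendsto x atTop (nhds L) := tendsto_atTop_ciSup hmono.monotone hb
  have hL0 : 1/2 < L := lt_of_lt_of_le h0 (le_ciSup hb 0)
  have hL1 : L ≤ 1 := ciSup_le fun n => (hinv n).2.le
  have hdenL : (0:ℝ) < L^d + (1-L)^d := by
    have : (0:ℝ) < L^d := pow_pos (by linarith) d
    have : (0:ℝ) ≤ (1-L)^d := pow_nonneg (by linarith) d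
    linarith
  have hshift : Tendsto (fun n => x (n+1)) atTop (nhds L) :=
    hL.comp (tendsto_add_atTop_nat 1)
  have hcont : Tendsto (fun n => (x n)^d / ((x n)^d + (1 - x n)^d)) atTop
      (nhds (L^d/(L^d+(1-L)^d))) := by
    have hd1 : Tendsto (fun n => (x n)^d) atTop (nhds (L^d)) := hL.pow d
    have hd2 : Tendsto (fun n => (1 - x n)^d) atTop (nhds ((1-L)^d)) :=
      (tendsto_const_nhds.sub hL).pow d
    exact hd1.div (hd1.add hd2) (ne_of_gt hdenL)
  have heq : L^d/(L^d+(1-L)^d) = L := by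
    have hfun : (fun n => x (n+1)) = fun n => (x n)^d / ((x n)^d + (1 - x n)^d) :=
      funext hrec
    exact tendsto_nhds_unique (hfun ▸ hshift) hcont |>.symm
  have hLeq : L = 1 := by
    rcases eq_or_lt_of_le hL1 with h | h
    · exact h
    · exfalso
      have hkey := aux_key d hd L hL0 h
      have heq' : L * (L^d + (1-L)^d) = L^d := by
        field_simp at heq
        linarith [heq]
      nlinarith
  exact ⟨hmono, hLeq ▸ hL⟩
end

section
/- Let G be an additive commutative group and let v : ℤ → G be supported on multiples of s (i.e., v(i) = 0 whenever s does not divide i), where s is a power of two. Define w_0 = v and w_{j+1}(i) = w_j(i) + w_j(i − 2^j). Then after log₂(s) iterations, w_{log₂ s}(q·s + r) = v(q·s) for all integers q and all 0 ≤ r < s; i.e., each nonzero value is replicated into the s consecutive slots to its right. -/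
/-- Correctness of the RR (Rotate For Replication) primitive: if `v` is supported
on multiples of `s = 2^m`, then after `m` rotate-and-add steps each value `v(q·s)`
is replicated into the `s` consecutive slots to its right. -/
theorem stmt_12 {G : Type*} [AddCommGroup G] (m : ℕ) (v : ℤ → G)
    (hsupp : ∀ i : ℤ, ¬ ((2 ^ m : ℤ) ∣ i) → v i = 0)
    (w : ℕ → ℤ → G) (h0 : w 0 = v)
    (hstep : ∀ j i, w (j + 1) i = w j i + w j (i - 2 ^ j)) :
    ∀ (q : ℤ) (r : ℕ), r < 2 ^ m →
      w m (q * 2 ^ m + (r : ℤ)) = v (q * 2 ^ m) := by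
  have key : ∀ j i, w j i = ∑ t ∈ Finset.range (2 ^ j), v (i - t) := by
    intro j
    induction j with
    | zero => intro i; simp [h0]
    | succ j ih =>
      intro i
      rw [hstep, ih, ih, pow_succ, mul_two, Finset.sum_range_add]
      congr 1
      apply Finset.sum_congr rfl
      intro t ht
      congr 1
      push_cast
      ring
  intro q r hr
  rw [key]
  rw [Finset.sum_eq_single r]
  · congr 1; ring
  · intro t ht hne
    apply hsupp
    intro hdvd
    have hdvd' : (2 ^ m : ℤ) ∣ ((r : ℤ) - t) := by
      have : (q * 2 ^ m + (r : ℤ) - t) = q * 2 ^ m + ((r:ℤ) - t) := by ring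
      rw [this] at hdvd
      exact (dvd_add_right ⟨q, mul_comm _ _⟩).mp hdvd
    have ht' : (t : ℤ) < 2 ^ m := by exact_mod_cast Finset.mem_range.mp ht
    have : (r : ℤ) - t = 0 := by
      refine Int.eq_zero_of_abs_lt_dvd hdvd' ?_
      rw [abs_lt]
      constructor <;> [linarith [Int.ofNat_nonneg r]; linarith [(show (0:ℤ) ≤ t from Int.ofNat_nonneg t), (show (r:ℤ) < 2^m by exact_mod_cast hr)]]
    apply hne
    exact_mod_cast (sub_eq_zero.mp this).symm
  · intro h; exact absurd (Finset.mem_range.mpr hr) h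
end
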